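/- arXiv:1409.5834 — 2 statements merged into one kernel-verified Lean document; each statement's English description precedes it below -/
import Mathlib

section
/- Flipping Lemma: Let G = (V,E) be a finite graph, y : V → {−1,+1} a ground truth, X : E → {−1,+1} edge observations, and let Ŷ ∈ {−1,+1}^V maximize Σ_{uv∈E} X_uv·Y_u·Y_v over all Y ∈ {−1,+1}^V. Let S ⊆ V be a nonempty set such that the induced subgraph G[S] is connected, Ŷ_v ≠ y_v for every v ∈ S, and S is maximal with these properties (equivalently, every vertex adjacent to S satisfies Ŷ_v = y_v). Then at least half of the edges of δ(S) are bad, i.e. #{uv ∈ δ(S) : X_uv ≠ y_u·y_v} ≥ |δ(S)|/2. -/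
open Finset

def IsSign (x : ℤ) : Prop := x = 1 ∨ x = -1

def pairProd {V : Type*} (y : V → ℤ) : Sym2 V → ℤ :=
  Sym2.lift ⟨fun u v => y u * y v, fun u v => mul_comm (y u) (y v)⟩

variable {V : Type*} [Fintype V] [DecidableEq V]

/-- The boundary `δ(S)`: edges of `G` with exactly one endpoint in `S`. -/
def bdry (G : SimpleGraph V) [DecidableRel G.Adj] (S : Finset V) : Finset (Sym2 V) :=
  G.edgeFinset.filter fun e => ∃ u v : V, e = s(u, v) ∧ u ∈ S ∧ v ∉ S

/-- `Yh` is a `±1` labeling maximizing `∑_{uv ∈ E} X_uv Y_u Y_v` over `±1` labelings,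
for edge observations given on all of `Sym2 V` (only values on edges matter). -/
def Maximizes (G : SimpleGraph V) [DecidableRel G.Adj] (X : Sym2 V → ℤ)
    (Yh : V → ℤ) : Prop :=
  (∀ v, IsSign (Yh v)) ∧
  ∀ Y : V → ℤ, (∀ v, IsSign (Y v)) →
    (∑ e ∈ G.edgeFinset, X e * pairProd Y e) ≤ ∑ e ∈ G.edgeFinset, X e * pairProd Yh e

lemma isSign_neg {x : ℤ} (h : IsSign x) : IsSign (-x) := by
  rcases h with h | h <;> simp [h, IsSign]

lemma sign_ne_eq_neg {x z : ℤ} (hx : IsSign x) (hz : IsSign z) (h : x ≠ z) : x = -z := by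
  rcases hx with hx | hx <;> rcases hz with hz | hz <;> simp_all

lemma sq_sign_eq_one {x : ℤ} (hx : IsSign x) : x * x = 1 := by
  rcases hx with hx | hx <;> simp [hx]

/-- Flipping Lemma: if `S` is a nonempty connected set of vertices all
mislabeled by a maximizer `Ŷ`, and maximal with this property (every vertex adjacent to
`S` is correctly labeled), then at least half of the edges of `δ(S)` are bad. -/
theorem flipping_lemma (G : SimpleGraph V) [DecidableRel G.Adj]
    (y : V → ℤ) (hy : ∀ v, IsSign (y v))
    (X : Sym2 V → ℤ) (hX : ∀ e ∈ G.edgeFinset, IsSign (X e))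
    (Yh : V → ℤ) (hmax : Maximizes G X Yh)
    (S : Finset V) (hSne : S.Nonempty)
    (hconn : (G.induce (S : Set V)).Connected)
    (hwrong : ∀ v ∈ S, Yh v ≠ y v)
    (hmaximal : ∀ u ∈ S, ∀ v, G.Adj u v → v ∉ S → Yh v = y v) :
    (bdry G S).card ≤ 2 * ((bdry G S).filter fun e => X e ≠ pairProd y e).card := by
  classical
  set B := bdry G S with hB
  have hsign := hmax.1
  set Y' : V → ℤ := fun v => if v ∈ S then -Yh v else Yh v with hY'
  have hY'sign : ∀ v, IsSign (Y' v) := by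
    intro v
    simp only [hY']
    split
    · exact isSign_neg (hsign v)
    · exact hsign v
  have hBsub : B ⊆ G.edgeFinset := filter_subset _ _
  have hflip : ∀ e ∈ B, pairProd Y' e = - pairProd Yh e := by
    intro e he
    obtain ⟨-, u, v, rfl, hu, hv⟩ := mem_filter.mp he
    simp [pairProd, hY', hu, hv]
  have hsame : ∀ e ∈ G.edgeFinset \ B, pairProd Y' e = pairProd Yh e := by
    intro e he
    rw [mem_sdiff] at he
    obtain ⟨heE, heB⟩ := he
    induction e using Sym2.ind with
    | _ u v =>
      have hnb : ¬ ∃ a b : V, s(u, v) = s(a, b) ∧ a ∈ S ∧ b ∉ S := by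
        intro h
        exact heB (mem_filter.mpr ⟨heE, h⟩)
      by_cases hu : u ∈ S <;> by_cases hv : v ∈ S
      · simp [pairProd, hY', hu, hv]
      · exact absurd ⟨u, v, rfl, hu, hv⟩ hnb
      · exact absurd ⟨v, u, Sym2.eq_swap, hv, hu⟩ hnb
      · simp [pairProd, hY', hu, hv]
  have hsplit : ∀ f : Sym2 V → ℤ,
      ∑ e ∈ G.edgeFinset, f e = ∑ e ∈ G.edgeFinset \ B, f e + ∑ e ∈ B, f e := by
    intro f
    exact (Finset.sum_sdiff hBsub).symm
  have hle := hmax.2 Y' hY'sign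
  rw [hsplit (fun e => X e * pairProd Y' e), hsplit (fun e => X e * pairProd Yh e)] at hle
  have h1 : ∑ e ∈ G.edgeFinset \ B, X e * pairProd Y' e
      = ∑ e ∈ G.edgeFinset \ B, X e * pairProd Yh e := by
    refine Finset.sum_congr rfl fun e he => ?_
    rw [hsame e he]
  have h2 : ∑ e ∈ B, X e * pairProd Y' e = ∑ e ∈ B, -(X e * pairProd Yh e) := by
    refine Finset.sum_congr rfl fun e he => ?_
    rw [hflip e he]; ring
  rw [h1, h2, Finset.sum_neg_distrib] at hle
  have hpos : 0 ≤ ∑ e ∈ B, X e * pairProd Yh e := by linarith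
  have hyrel : ∀ e ∈ B, pairProd Yh e = - pairProd y e := by
    intro e he
    obtain ⟨heE, u, v, rfl, hu, hv⟩ := mem_filter.mp he
    have hadj : G.Adj u v := by
      rwa [SimpleGraph.mem_edgeFinset, SimpleGraph.mem_edgeSet] at heE
    have hYv : Yh v = y v := hmaximal u hu v hadj hv
    have hYu : Yh u = - y u := sign_ne_eq_neg (hsign u) (hy u) (hwrong u hu)
    simp [pairProd, hYu, hYv]
  have hneg : ∑ e ∈ B, X e * pairProd y e ≤ 0 := by
    have : ∑ e ∈ B, X e * pairProd Yh e = ∑ e ∈ B, -(X e * pairProd y e) := by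
      refine Finset.sum_congr rfl fun e he => ?_
      rw [hyrel e he]; ring
    rw [this, Finset.sum_neg_distrib] at hpos
    linarith
  -- counting
  have hterm : ∀ e ∈ B, X e * pairProd y e = if X e = pairProd y e then 1 else -1 := by
    intro e he
    have hXe : IsSign (X e) := hX e (hBsub he)
    have hpe : IsSign (pairProd y e) := by
      induction e using Sym2.ind with
      | _ u v =>
        rcases hy u with h | h <;> rcases hy v with h' | h' <;>
          simp [pairProd, h, h', IsSign]
    by_cases hgood : X e = pairProd y e
    · rw [if_pos hgood, hgood]; exact sq_sign_eq_one hpe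
    · rw [if_neg hgood, sign_ne_eq_neg hXe hpe hgood]
      have := sq_sign_eq_one hpe
      linarith [sq_sign_eq_one hpe]
  rw [Finset.sum_congr rfl hterm, Finset.sum_ite, Finset.sum_const, Finset.sum_const] at hneg
  have hcards := Finset.card_filter_add_card_filter_not
    (s := B) (p := fun e => X e = pairProd y e)
  simp only [nsmul_eq_mul, mul_one, mul_neg] at hneg
  have hfn : (B.filter fun e => ¬ X e = pairProd y e)
      = (B.filter fun e => X e ≠ pairProd y e) := rfl
  have : ((B.filter fun e => X e = pairProd y e).card : ℤ)
      ≤ ((B.filter fun e => X e ≠ pairProd y e).card : ℤ) := by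
    rw [hfn] at hneg; linarith
  have hcard : (B.filter fun e => X e = pairProd y e).card
      ≤ (B.filter fun e => X e ≠ pairProd y e).card := by exact_mod_cast this
  rw [hfn] at hcards
  omega
end

section
/- Lower bound for grids: For every node noise q ∈ (0, 1/2] there exists a constant c > 0 such that for every edge noise p ∈ (0, 0.078] there exists N₀ such that for all n with n² ≥ N₀ and every function A mapping observations (node and edge labels) of the n×n grid graph to labelings in {−1,+1}^V, there exists a ground truth y : V → {−1,+1} for which the expected Hamming error of A(X) with respect to y (expectation over the random observations X generated from y) is at least c·p²·n². -/
open Finset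

def gridGraph (n : ℕ) : SimpleGraph (Fin n × Fin n) where
  Adj u v := (u.1 = v.1 ∧ Nat.dist u.2.val v.2.val = 1) ∨
    (u.2 = v.2 ∧ Nat.dist u.1.val v.1.val = 1)
  symm := by
    constructor
    intro u v h
    rcases h with ⟨h1, h2⟩ | ⟨h1, h2⟩
    · exact Or.inl ⟨h1.symm, by rwa [Nat.dist_comm]⟩
    · exact Or.inr ⟨h1.symm, by rwa [Nat.dist_comm]⟩
  loopless := by
    constructor
    intro u h
    rcases h with ⟨_, h2⟩ | ⟨_, h2⟩ <;> simp [Nat.dist_self] at h2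

instance (n : ℕ) : DecidableRel (gridGraph n).Adj := fun u v =>
  inferInstanceAs (Decidable ((u.1 = v.1 ∧ Nat.dist u.2.val v.2.val = 1) ∨
    (u.2 = v.2 ∧ Nat.dist u.1.val v.1.val = 1)))

variable {V : Type*} [Fintype V] [DecidableEq V]

def hamming (Yh y : V → ℤ) : ℕ := (univ.filter fun v => Yh v ≠ y v).card

/-- Expectation over the random observations generated from ground truth `y` with edge
noise `p` and node noise `q`. -/
noncomputable def expVal (G : SimpleGraph V) [DecidableRel G.Adj] (p q : ℝ) (y : V → ℤ)
    (f : ((G.edgeSet → ℤ) × (V → ℤ)) → ℝ) : ℝ :=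
  ∑ fE : G.edgeSet → Bool, ∑ fV : V → Bool,
    ((∏ e : G.edgeSet, if fE e then p else 1 - p) * ∏ v : V, if fV v then q else 1 - q) *
      f (fun e => (if fE e then -1 else 1) * pairProd y e.val,
         fun v => (if fV v then -1 else 1) * y v)

def flipAt {V : Type*} [DecidableEq V] (u : V) (y : V → ℤ) : V → ℤ :=
  fun v => if v = u then -y v else y v

lemma sum_pi_bool {ι : Type*} [Fintype ι] [DecidableEq ι] (g : ι → Bool → ℝ) :
    ∑ f : ι → Bool, ∏ i, g i (f i) = ∏ i, (g i true + g i false) := by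
  have h : ∀ i : ι, g i true + g i false = ∑ b ∈ (univ : Finset Bool), g i b := by
    intro i; simp [Fintype.sum_bool, add_comm]
  rw [Finset.prod_congr rfl fun i _ => h i, Finset.prod_univ_sum, Fintype.piFinset_univ]

lemma pairProd_flipAt_mem {V : Type*} [DecidableEq V] (u : V) (y : V → ℤ)
    (e : Sym2 V) (hd : ¬ e.IsDiag) (hm : u ∈ e) :
    pairProd (flipAt u y) e = - pairProd y e := by
  induction e using Sym2.ind with
  | _ a b =>
    rw [Sym2.mk_isDiag_iff] at hd
    rw [Sym2.mem_iff] at hm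
    by_cases ha : a = u <;> by_cases hb : b = u
    · exact absurd (ha.trans hb.symm) hd
    · simp [pairProd, flipAt, ha, hb]
    · simp [pairProd, flipAt, ha, hb]
    · rcases hm with h | h
      · exact absurd h.symm ha
      · exact absurd h.symm hb

lemma pairProd_flipAt_not_mem {V : Type*} [DecidableEq V] (u : V) (y : V → ℤ)
    (e : Sym2 V) (hm : u ∉ e) :
    pairProd (flipAt u y) e = pairProd y e := by
  induction e using Sym2.ind with
  | _ a b =>
    rw [Sym2.mem_iff] at hm
    push_neg at hm
    have ha : ¬ (a = u) := fun h => hm.1 h.symm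
    have hb : ¬ (b = u) := fun h => hm.2 h.symm
    simp [pairProd, flipAt, ha, hb]

lemma ind_nonneg (P : Prop) [Decidable P] : (0:ℝ) ≤ if P then 0 else 1 := by
  split <;> norm_num

set_option maxHeartbeats 2000000 in
lemma core_pair_bound {V : Type*} [Fintype V] [DecidableEq V]
    (G : SimpleGraph V) [DecidableRel G.Adj]
    (p q : ℝ) (hp0 : 0 < p) (hp1 : p ≤ 1/2) (hq0 : 0 < q) (hq1 : q ≤ 1/2)
    (u : V) (e1 e2 e3 e4 : G.edgeSet)
    (h12 : e1 ≠ e2) (h13 : e1 ≠ e3) (h14 : e1 ≠ e4)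
    (h23 : e2 ≠ e3) (h24 : e2 ≠ e4) (h34 : e3 ≠ e4)
    (hinc : ∀ e : G.edgeSet, u ∈ e.val ↔ (e = e1 ∨ e = e2 ∨ e = e3 ∨ e = e4))
    (y : V → ℤ) (hy : IsSign (y u))
    (A : ((G.edgeSet → ℤ) × (V → ℤ)) → (V → ℤ)) (hA : ∀ X, IsSign (A X u)) :
    q * (p^2 * (1-p)^2) ≤
      expVal G p q y (fun X => if A X u = y u then 0 else 1)
      + expVal G p q (flipAt u y) (fun X => if A X u = flipAt u y u then 0 else 1) := by
  classical
  set χ : G.edgeSet → Bool := fun e => decide (e = e1 ∨ e = e2 ∨ e = e3 ∨ e = e4) with hχ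
  set φE : (G.edgeSet → Bool) → (G.edgeSet → Bool) := fun fE e => xor (fE e) (χ e) with hφE
  set φV : (V → Bool) → (V → Bool) := fun fV v => xor (fV v) (decide (v = u)) with hφV
  have hbijE : Function.Bijective φE := by
    apply Function.Involutive.bijective
    intro f; funext e; simp [hφE]
  have hbijV : Function.Bijective φV := by
    apply Function.Involutive.bijective
    intro f; funext v; simp [hφV]
  have hflipu : flipAt u y u = -(y u) := by simp [flipAt]
  -- the observation for ground truth y
  have hXeq : ∀ (fE : G.edgeSet → Bool) (fV : V → Bool),
      ((fun e : G.edgeSet => (if φE fE e then (-1:ℤ) else 1) * pairProd (flipAt u y) e.val,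
        fun v => (if φV fV v then (-1:ℤ) else 1) * flipAt u y v) :
        (G.edgeSet → ℤ) × (V → ℤ))
      = (fun e => (if fE e then (-1:ℤ) else 1) * pairProd y e.val,
         fun v => (if fV v then (-1:ℤ) else 1) * y v) := by
    intro fE fV
    refine Prod.ext ?_ ?_ <;> simp only
    · funext e
      by_cases hm : u ∈ e.val
      · have hor := (hinc e).mp hm
        have hχe : χ e = true := by simp [hχ, hor]
        rw [pairProd_flipAt_mem u y e.val (G.not_isDiag_of_mem_edgeSet e.2) hm]
        cases hfe : fE e <;> simp [hφE, hχe, hfe]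
      · have hor : ¬(e = e1 ∨ e = e2 ∨ e = e3 ∨ e = e4) := fun h => hm ((hinc e).mpr h)
        have hχe : χ e = false := by simp [hχ]; tauto
        rw [pairProd_flipAt_not_mem u y e.val hm]
        simp [hφE, hχe]
    · funext v
      by_cases hv : v = u
      · subst hv
        cases hfv : fV v <;> simp [hφV, hfv, flipAt]
      · simp [hφV, hv, flipAt]
  have h2 : (∑ fE : G.edgeSet → Bool, ∑ fV : V → Bool,
      ((∏ e : G.edgeSet, if φE fE e then p else 1 - p) *
        ∏ v : V, if φV fV v then q else 1 - q) *
        (if A (fun e => (if fE e then (-1:ℤ) else 1) * pairProd y e.val,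
               fun v => (if fV v then (-1:ℤ) else 1) * y v) u = -(y u)
          then (0:ℝ) else 1))
      = expVal G p q (flipAt u y) (fun X => if A X u = flipAt u y u then 0 else 1) := by
    simp only [expVal]
    refine Fintype.sum_bijective φE hbijE _ _ (fun fE => ?_)
    refine Fintype.sum_bijective φV hbijV _ _ (fun fV => ?_)
    rw [hXeq fE fV, hflipu]

  -- lower bound weight functions
  set gE : G.edgeSet → Bool → ℝ := fun e b =>
    if e = e1 ∨ e = e2 then (if b then p else 0)
    else if e = e3 ∨ e = e4 then (if b then 0 else 1-p)
    else (if b then p else 1-p) with hgE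
  set hVf : V → Bool → ℝ := fun v b =>
    if v = u then (if b then q else 0) else (if b then q else 1-q) with hhV
  have hLBsum : ∑ fE : G.edgeSet → Bool, ∑ fV : V → Bool,
      (∏ e : G.edgeSet, gE e (fE e)) * (∏ v : V, hVf v (fV v)) = q * (p^2 * (1-p)^2) := by
    rw [← Finset.sum_mul_sum, sum_pi_bool, sum_pi_bool]
    have hE : ∏ e : G.edgeSet, (gE e true + gE e false) = p^2 * (1-p)^2 := by
      have hre : ∀ e : G.edgeSet, (gE e true + gE e false) =
          (if e = e1 ∨ e = e2 then p else if e = e3 ∨ e = e4 then 1-p else 1) := by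
        intro e
        by_cases h1 : e = e1 ∨ e = e2 <;> by_cases h2 : e = e3 ∨ e = e4 <;>
          simp [hgE, h1, h2] <;> ring
      rw [Finset.prod_congr rfl fun e _ => hre e]
      rw [← Finset.prod_subset (Finset.subset_univ ({e1,e2,e3,e4} : Finset G.edgeSet))
        (by
          intro x _ hx
          simp only [Finset.mem_insert, Finset.mem_singleton] at hx
          push_neg at hx
          simp [hx.1, hx.2.1, hx.2.2.1, hx.2.2.2])]
      rw [Finset.prod_insert (by simp [h12, h13, h14]),
          Finset.prod_insert (by simp [h23, h24]),
          Finset.prod_insert (by simp [h34]), Finset.prod_singleton]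
      have v1 : (if e1 = e1 ∨ e1 = e2 then p else if e1 = e3 ∨ e1 = e4 then 1-p else 1) = p := by
        simp
      have v2 : (if e2 = e1 ∨ e2 = e2 then p else if e2 = e3 ∨ e2 = e4 then 1-p else 1) = p := by
        simp
      have v3 : (if e3 = e1 ∨ e3 = e2 then p else if e3 = e3 ∨ e3 = e4 then 1-p else 1) = 1-p := by
        simp [Ne.symm h13, Ne.symm h23]
      have v4 : (if e4 = e1 ∨ e4 = e2 then p else if e4 = e3 ∨ e4 = e4 then 1-p else 1) = 1-p := by
        simp [Ne.symm h14, Ne.symm h24]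
      rw [v1, v2, v3, v4]; ring
    have hV : ∏ v : V, (hVf v true + hVf v false) = q := by
      have hrv : ∀ v : V, hVf v true + hVf v false = if v = u then q else 1 := by
        intro v; by_cases hv : v = u <;> simp [hhV, hv] <;> ring
      rw [Finset.prod_congr rfl fun v _ => hrv v]
      rw [Finset.prod_eq_single u (fun v _ hv => by simp [hv]) (by simp)]
      simp
    rw [hE, hV]; ring
  -- replace goal by sums
  rw [← h2, ← hLBsum]
  have hexp0 : expVal G p q y (fun X => if A X u = y u then (0:ℝ) else 1)
      = ∑ fE : G.edgeSet → Bool, ∑ fV : V → Bool,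
        ((∏ e : G.edgeSet, if fE e then p else 1 - p) * ∏ v : V, if fV v then q else 1 - q) *
          (if A (fun e => (if fE e then (-1:ℤ) else 1) * pairProd y e.val,
                 fun v => (if fV v then (-1:ℤ) else 1) * y v) u = y u then (0:ℝ) else 1) := rfl
  rw [hexp0, ← Finset.sum_add_distrib]
  apply Finset.sum_le_sum
  intro fE _
  rw [← Finset.sum_add_distrib]
  apply Finset.sum_le_sum
  intro fV _
  -- pointwise bound
  have hwE0 : ∀ f : G.edgeSet → Bool, (0:ℝ) ≤ ∏ e : G.edgeSet, (if f e then p else 1-p) :=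
    fun f => Finset.prod_nonneg fun e _ => by split <;> linarith
  have hwV0 : ∀ f : V → Bool, (0:ℝ) ≤ ∏ v : V, (if f v then q else 1-q) :=
    fun f => Finset.prod_nonneg fun v _ => by split <;> linarith
  set z := A (fun e => (if fE e then (-1:ℤ) else 1) * pairProd y e.val,
              fun v => (if fV v then (-1:ℤ) else 1) * y v) u with hzdef
  have hzs : IsSign z := hA _
  have hi0 : (0:ℝ) ≤ (if z = y u then (0:ℝ) else 1) := ind_nonneg _
  have hi1 : (0:ℝ) ≤ (if z = -(y u) then (0:ℝ) else 1) := ind_nonneg _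
  have hisum : (1:ℝ) ≤ (if z = y u then (0:ℝ) else 1) + (if z = -(y u) then (0:ℝ) else 1) := by
    by_cases h : z = y u
    · have hne : ¬ (z = -(y u)) := by
        rcases hy with h' | h' <;> rw [h, h'] <;> decide
      rw [if_pos h, if_neg hne]; norm_num
    · rw [if_neg h]
      have := ind_nonneg (z = -(y u))
      linarith
  have htriv : (0:ℝ) ≤
      ((∏ e : G.edgeSet, if fE e then p else 1 - p) * ∏ v : V, if fV v then q else 1 - q) *
        (if z = y u then (0:ℝ) else 1) +
      ((∏ e : G.edgeSet, if φE fE e then p else 1 - p) * ∏ v : V, if φV fV v then q else 1 - q) *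
        (if z = -(y u) then (0:ℝ) else 1) :=
    add_nonneg (mul_nonneg (mul_nonneg (hwE0 fE) (hwV0 fV)) hi0)
      (mul_nonneg (mul_nonneg (hwE0 (φE fE)) (hwV0 (φV fV))) hi1)
  by_cases hc1 : fE e1 = true
  case neg =>
    have h0 : gE e1 (fE e1) = 0 := by
      rw [Bool.not_eq_true] at hc1
      rw [hc1]; simp [hgE]
    refine le_trans (le_of_eq ?_) htriv
    rw [Finset.prod_eq_zero (Finset.mem_univ e1) h0, zero_mul]
  case pos =>
  by_cases hc2 : fE e2 = true
  case neg =>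
    have h0 : gE e2 (fE e2) = 0 := by
      rw [Bool.not_eq_true] at hc2
      rw [hc2]; simp [hgE]
    refine le_trans (le_of_eq ?_) htriv
    rw [Finset.prod_eq_zero (Finset.mem_univ e2) h0, zero_mul]
  case pos =>
  by_cases hc3 : fE e3 = false
  case neg =>
    have h0 : gE e3 (fE e3) = 0 := by
      rw [Bool.not_eq_false] at hc3
      rw [hc3]; simp [hgE, Ne.symm h13, Ne.symm h23]
    refine le_trans (le_of_eq ?_) htriv
    rw [Finset.prod_eq_zero (Finset.mem_univ e3) h0, zero_mul]
  case pos =>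
  by_cases hc4 : fE e4 = false
  case neg =>
    have h0 : gE e4 (fE e4) = 0 := by
      rw [Bool.not_eq_false] at hc4
      rw [hc4]; simp [hgE, Ne.symm h14, Ne.symm h24]
    refine le_trans (le_of_eq ?_) htriv
    rw [Finset.prod_eq_zero (Finset.mem_univ e4) h0, zero_mul]
  case pos =>
  by_cases hc5 : fV u = true
  case neg =>
    have h0 : hVf u (fV u) = 0 := by
      rw [Bool.not_eq_true] at hc5
      rw [hc5]; simp [hhV]
    refine le_trans (le_of_eq ?_) htriv
    rw [Finset.prod_eq_zero (Finset.mem_univ u) h0, mul_zero]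
  case pos =>
  -- all constraints hold
  have hLBE : ∏ e : G.edgeSet, gE e (fE e) = ∏ e : G.edgeSet, (if fE e then p else 1-p) := by
    refine Finset.prod_congr rfl fun e _ => ?_
    by_cases he1 : e = e1
    · subst he1; rw [hc1]; simp [hgE]
    · by_cases he2 : e = e2
      · subst he2; rw [hc2]; simp [hgE]
      · by_cases he3 : e = e3
        · subst he3; rw [hc3]; simp [hgE, Ne.symm h13, Ne.symm h23]
        · by_cases he4 : e = e4
          · subst he4; rw [hc4]; simp [hgE, Ne.symm h14, Ne.symm h24]
          · simp [hgE, he1, he2, he3, he4]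
  have hLBV : ∏ v : V, hVf v (fV v) = ∏ v : V, (if fV v then q else 1-q) := by
    refine Finset.prod_congr rfl fun v _ => ?_
    by_cases hv : v = u
    · subst hv; rw [hc5]; simp [hhV]
    · simp [hhV, hv]
  have hχ1 : χ e1 = true := by simp [hχ]
  have hχ2 : χ e2 = true := by simp [hχ]
  have hχ3 : χ e3 = true := by simp [hχ]
  have hχ4 : χ e4 = true := by simp [hχ]
  have hwEeq : ∏ e : G.edgeSet, (if φE fE e then p else 1-p)
      = ∏ e : G.edgeSet, (if fE e then p else 1-p) := by
    rw [← Finset.prod_mul_prod_compl ({e1,e2,e3,e4} : Finset G.edgeSet),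
        ← Finset.prod_mul_prod_compl ({e1,e2,e3,e4} : Finset G.edgeSet)
          (fun e => if fE e then p else 1-p)]
    have hcompl : ∏ e ∈ ({e1,e2,e3,e4} : Finset G.edgeSet)ᶜ, (if φE fE e then p else 1-p)
        = ∏ e ∈ ({e1,e2,e3,e4} : Finset G.edgeSet)ᶜ, (if fE e then p else 1-p) := by
      refine Finset.prod_congr rfl fun e he => ?_
      have hne : ¬(e = e1 ∨ e = e2 ∨ e = e3 ∨ e = e4) := by
        have := Finset.mem_compl.mp he
        simp only [Finset.mem_insert, Finset.mem_singleton] at this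
        push_neg at this
        tauto
      have hχe : χ e = false := by simp [hχ]; tauto
      simp [hφE, hχe]
    rw [hcompl]
    congr 1
    rw [Finset.prod_insert (by simp [h12, h13, h14]),
        Finset.prod_insert (by simp [h23, h24]),
        Finset.prod_insert (by simp [h34]), Finset.prod_singleton,
        Finset.prod_insert (by simp [h12, h13, h14]),
        Finset.prod_insert (by simp [h23, h24]),
        Finset.prod_insert (by simp [h34]), Finset.prod_singleton]
    rw [hc1, hc2, hc3, hc4]
    simp only [hφE, hχ1, hχ2, hχ3, hχ4, hc1, hc2, hc3, hc4]
    norm_num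
    ring
  have hwVle : ∏ v : V, (if fV v then q else 1-q)
      ≤ ∏ v : V, (if φV fV v then q else 1-q) := by
    rw [← Finset.mul_prod_erase Finset.univ (fun v => if fV v then q else 1-q)
          (Finset.mem_univ u),
        ← Finset.mul_prod_erase Finset.univ (fun v => if φV fV v then q else 1-q)
          (Finset.mem_univ u)]
    have herase : ∏ v ∈ Finset.univ.erase u, (if φV fV v then q else 1-q)
        = ∏ v ∈ Finset.univ.erase u, (if fV v then q else 1-q) := by
      refine Finset.prod_congr rfl fun v hv => ?_
      have hvne : ¬ (v = u) := (Finset.mem_erase.mp hv).1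
      simp [hφV, hvne]
    rw [herase]
    apply mul_le_mul_of_nonneg_right
    · have hφu : φV fV u = false := by simp [hφV, hc5]
      rw [hc5, hφu]
      simp; linarith
    · exact Finset.prod_nonneg fun v _ => by split <;> linarith
  rw [hLBE, hLBV, hwEeq]
  calc (∏ e : G.edgeSet, (if fE e then p else 1-p)) * ∏ v : V, (if fV v then q else 1-q)
      ≤ ((∏ e : G.edgeSet, (if fE e then p else 1-p)) * ∏ v : V, (if fV v then q else 1-q)) *
          ((if z = y u then (0:ℝ) else 1) + (if z = -(y u) then (0:ℝ) else 1)) := by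
        exact le_mul_of_one_le_right (mul_nonneg (hwE0 fE) (hwV0 fV)) hisum
    _ = ((∏ e : G.edgeSet, (if fE e then p else 1-p)) * ∏ v : V, (if fV v then q else 1-q)) *
          (if z = y u then (0:ℝ) else 1) +
        ((∏ e : G.edgeSet, (if fE e then p else 1-p)) * ∏ v : V, (if fV v then q else 1-q)) *
          (if z = -(y u) then (0:ℝ) else 1) := by ring
    _ ≤ ((∏ e : G.edgeSet, (if fE e then p else 1-p)) * ∏ v : V, (if fV v then q else 1-q)) *
          (if z = y u then (0:ℝ) else 1) +
        ((∏ e : G.edgeSet, (if fE e then p else 1-p)) * ∏ v : V, (if φV fV v then q else 1-q)) *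
          (if z = -(y u) then (0:ℝ) else 1) := by
        apply add_le_add le_rfl
        apply mul_le_mul_of_nonneg_right _ hi1
        exact mul_le_mul_of_nonneg_left hwVle (hwE0 fE)

set_option maxHeartbeats 1000000 in
lemma grid_edges (n : ℕ) (u : Fin n × Fin n)
    (h1 : 0 < u.1.val) (h2 : u.1.val + 1 < n) (h3 : 0 < u.2.val) (h4 : u.2.val + 1 < n) :
    ∃ e1 e2 e3 e4 : (gridGraph n).edgeSet,
      e1 ≠ e2 ∧ e1 ≠ e3 ∧ e1 ≠ e4 ∧ e2 ≠ e3 ∧ e2 ≠ e4 ∧ e3 ≠ e4 ∧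
      ∀ e : (gridGraph n).edgeSet, u ∈ e.val ↔ (e = e1 ∨ e = e2 ∨ e = e3 ∨ e = e4) := by
  obtain ⟨i, j⟩ := u
  replace h1 : 0 < i.val := h1
  replace h2 : i.val + 1 < n := h2
  replace h3 : 0 < j.val := h3
  replace h4 : j.val + 1 < n := h4
  set a1 : Fin n × Fin n := (⟨i.val - 1, by omega⟩, j) with ha1
  set a2 : Fin n × Fin n := (⟨i.val + 1, by omega⟩, j) with ha2
  set a3 : Fin n × Fin n := (i, ⟨j.val - 1, by omega⟩) with ha3
  set a4 : Fin n × Fin n := (i, ⟨j.val + 1, by omega⟩) with ha4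
  have had1 : (gridGraph n).Adj (i, j) a1 := Or.inr ⟨rfl, by simp only [ha1, Nat.dist]; omega⟩
  have had2 : (gridGraph n).Adj (i, j) a2 := Or.inr ⟨rfl, by simp only [ha2, Nat.dist]; omega⟩
  have had3 : (gridGraph n).Adj (i, j) a3 := Or.inl ⟨rfl, by simp only [ha3, Nat.dist]; omega⟩
  have had4 : (gridGraph n).Adj (i, j) a4 := Or.inl ⟨rfl, by simp only [ha4, Nat.dist]; omega⟩
  refine ⟨⟨s((i,j), a1), (gridGraph n).mem_edgeSet.mpr had1⟩,
          ⟨s((i,j), a2), (gridGraph n).mem_edgeSet.mpr had2⟩,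
          ⟨s((i,j), a3), (gridGraph n).mem_edgeSet.mpr had3⟩,
          ⟨s((i,j), a4), (gridGraph n).mem_edgeSet.mpr had4⟩, ?_, ?_, ?_, ?_, ?_, ?_, ?_⟩
  · intro h
    have h' := Subtype.ext_iff.mp h
    rw [Sym2.eq_iff] at h'
    simp only [ha1, ha2, Prod.mk.injEq, Fin.ext_iff] at h'
    omega
  · intro h
    have h' := Subtype.ext_iff.mp h
    rw [Sym2.eq_iff] at h'
    simp only [ha1, ha3, Prod.mk.injEq, Fin.ext_iff] at h'
    omega
  · intro h
    have h' := Subtype.ext_iff.mp h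
    rw [Sym2.eq_iff] at h'
    simp only [ha1, ha4, Prod.mk.injEq, Fin.ext_iff] at h'
    omega
  · intro h
    have h' := Subtype.ext_iff.mp h
    rw [Sym2.eq_iff] at h'
    simp only [ha2, ha3, Prod.mk.injEq, Fin.ext_iff] at h'
    omega
  · intro h
    have h' := Subtype.ext_iff.mp h
    rw [Sym2.eq_iff] at h'
    simp only [ha2, ha4, Prod.mk.injEq, Fin.ext_iff] at h'
    omega
  · intro h
    have h' := Subtype.ext_iff.mp h
    rw [Sym2.eq_iff] at h'
    simp only [ha3, ha4, Prod.mk.injEq, Fin.ext_iff] at h'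
    omega
  · have hmem : ∀ v : Fin n × Fin n, (gridGraph n).Adj (i, j) v →
        (v = a1 ∨ v = a2 ∨ v = a3 ∨ v = a4) := by
      rintro ⟨vi, vj⟩ h
      rcases h with ⟨hh1, hh2⟩ | ⟨hh1, hh2⟩ <;>
      all_goals
        simp only [ha1, ha2, ha3, ha4, Nat.dist, Prod.mk.injEq, Fin.ext_iff] at hh1 hh2 ⊢ <;>
        omega
    rintro ⟨e, he⟩
    induction e using Sym2.ind with
    | _ a b =>
      have hadj : (gridGraph n).Adj a b := (gridGraph n).mem_edgeSet.mp he
      simp only [Subtype.mk.injEq]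
      constructor
      · intro hm
        rw [Sym2.mem_iff] at hm
        rcases hm with h | h
        · rcases hmem b (h ▸ hadj) with h' | h' | h' | h' <;>
            rw [← h, h'] <;> tauto
        · have hadj' : (gridGraph n).Adj (i, j) a := h ▸ hadj.symm
          rcases hmem a hadj' with h' | h' | h' | h' <;>
            rw [← h, h', Sym2.eq_swap] <;> tauto
      · rintro (h | h | h | h) <;> rw [h] <;> simp [Sym2.mem_iff]

def flipB {V : Type*} [DecidableEq V] (u : V) (s : V → Bool) : V → Bool :=
  fun v => if v = u then !(s v) else s v

def ySof {V : Type*} (s : V → Bool) : V → ℤ := fun v => if s v then -1 else 1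

def interiorSet (n : ℕ) : Finset (Fin n × Fin n) :=
  univ.filter (fun v => 0 < v.1.val ∧ v.1.val + 1 < n ∧ 0 < v.2.val ∧ v.2.val + 1 < n)

lemma flipAt_ySof {V : Type*} [DecidableEq V] (u : V) (s : V → Bool) :
    flipAt u (ySof s) = ySof (flipB u s) := by
  funext v
  by_cases h : v = u
  · subst h; cases hsv : s v <;> simp [flipAt, ySof, flipB, hsv]
  · simp [flipAt, ySof, flipB, h]

lemma flipB_bijective {V : Type*} [DecidableEq V] (u : V) : Function.Bijective (flipB u) := by
  apply Function.Involutive.bijective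
  intro s; funext v; by_cases h : v = u <;> simp [flipB, h]

set_option maxHeartbeats 1000000 in
lemma hamming_ge (n : ℕ) (p q : ℝ) (hp0 : 0 ≤ p) (hp1 : p ≤ 1) (hq0 : 0 ≤ q) (hq1 : q ≤ 1)
    (A : (((gridGraph n).edgeSet → ℤ) × (Fin n × Fin n → ℤ)) → (Fin n × Fin n → ℤ))
    (y : Fin n × Fin n → ℤ) :
    ∑ u ∈ interiorSet n, expVal (gridGraph n) p q y (fun X => if A X u = y u then 0 else 1)
      ≤ expVal (gridGraph n) p q y (fun X => (hamming (A X) y : ℝ)) := by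
  have hswap : ∑ u ∈ interiorSet n,
        expVal (gridGraph n) p q y (fun X => if A X u = y u then (0:ℝ) else 1)
      = ∑ fE : (gridGraph n).edgeSet → Bool, ∑ fV : (Fin n × Fin n) → Bool,
          ((∏ e : (gridGraph n).edgeSet, if fE e then p else 1 - p) *
            ∏ v : Fin n × Fin n, if fV v then q else 1 - q) *
          ∑ u ∈ interiorSet n,
            (if A (fun e => (if fE e then (-1:ℤ) else 1) * pairProd y e.val,
                   fun v => (if fV v then (-1:ℤ) else 1) * y v) u = y u then (0:ℝ) else 1) := by
    simp only [expVal]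
    rw [Finset.sum_comm]
    refine Finset.sum_congr rfl fun fE _ => ?_
    rw [Finset.sum_comm]
    refine Finset.sum_congr rfl fun fV _ => ?_
    rw [Finset.mul_sum]
  rw [hswap]
  simp only [expVal]
  apply Finset.sum_le_sum; intro fE _
  apply Finset.sum_le_sum; intro fV _
  apply mul_le_mul_of_nonneg_left _ (mul_nonneg
    (Finset.prod_nonneg fun e _ => by split <;> linarith)
    (Finset.prod_nonneg fun v _ => by split <;> linarith))
  set X := (fun e => (if fE e then (-1:ℤ) else 1) * pairProd y e.val,
       fun v : Fin n × Fin n => (if fV v then (-1:ℤ) else 1) * y v) with hX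
  have h1 : ∑ u ∈ interiorSet n, (if A X u = y u then (0:ℝ) else 1)
      = ∑ u ∈ interiorSet n, (if A X u ≠ y u then (1:ℝ) else 0) := by
    refine Finset.sum_congr rfl fun u _ => ?_
    by_cases h : A X u = y u <;> simp [h]
  rw [h1, Finset.sum_boole]
  have h2 : ((interiorSet n).filter (fun u => A X u ≠ y u)).card ≤ hamming (A X) y := by
    apply Finset.card_le_card
    apply Finset.filter_subset_filter
    exact Finset.subset_univ _
  exact_mod_cast Nat.cast_le.mpr h2

lemma card_interior (n : ℕ) (hn : 4 ≤ n) : (n:ℝ)^2/4 ≤ ((interiorSet n).card : ℝ) := by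
  have hinj : (n-2)*(n-2) ≤ (interiorSet n).card := by
    classical
    have hmain := Finset.card_le_card_of_injOn
      (f := fun ab : Fin (n-2) × Fin (n-2) =>
        ((⟨ab.1.val + 1, by have h := ab.1.isLt; omega⟩ : Fin n),
         (⟨ab.2.val + 1, by have h := ab.2.isLt; omega⟩ : Fin n)))
      (s := (univ : Finset (Fin (n-2) × Fin (n-2)))) (t := interiorSet n)
      (by
        intro ab _
        have h1 := ab.1.isLt
        have h2 := ab.2.isLt
        simp only [interiorSet, Finset.mem_coe, Finset.mem_filter, Finset.mem_univ, true_and]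
        refine ⟨by omega, by omega, by omega, by omega⟩)
      (by
        intro a _ b _ h
        simp only [Prod.mk.injEq, Fin.mk.injEq] at h
        have : a.1.val = b.1.val := by omega
        have : a.2.val = b.2.val := by omega
        ext <;> omega)
    simpa [Finset.card_univ] using hmain
  have h2n : 2 ≤ n := by omega
  have hcast : ((n-2 : ℕ) : ℝ) = (n:ℝ) - 2 := by
    push_cast [Nat.cast_sub h2n]; ring
  have hle : (((n-2)*(n-2) : ℕ) : ℝ) ≤ ((interiorSet n).card : ℝ) := Nat.cast_le.mpr hinj
  rw [Nat.cast_mul, hcast] at hle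
  have hn' : (4:ℝ) ≤ (n:ℝ) := by exact_mod_cast hn
  nlinarith

set_option maxHeartbeats 2000000 in
/-- lower bound for grids: for every node noise `q ∈ (0, 1/2]` there is a
constant `c > 0` such that for every edge noise `p ∈ (0, 0.078]` there is `N₀` such that
for all `n` with `n² ≥ N₀` and every algorithm `A` mapping observations to labelings,
some ground truth forces expected Hamming error at least `c p² n²`. -/
theorem grid_expected_error_lower_bound :
    ∀ q : ℝ, 0 < q → q ≤ 1/2 →
    ∃ c : ℝ, 0 < c ∧
      ∀ p : ℝ, 0 < p → p ≤ 0.078 →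
      ∃ N₀ : ℕ, ∀ n : ℕ, N₀ ≤ n^2 →
      ∀ A : (((gridGraph n).edgeSet → ℤ) × (Fin n × Fin n → ℤ)) → (Fin n × Fin n → ℤ),
      (∀ X v, IsSign (A X v)) →
      ∃ y : Fin n × Fin n → ℤ, (∀ v, IsSign (y v)) ∧
        c * p^2 * (n : ℝ)^2 ≤
          expVal (gridGraph n) p q y (fun X => (hamming (A X) y : ℝ)) := by
  intro q hq0 hq1
  refine ⟨q/16, by positivity, ?_⟩
  intro p hp0 hp1
  refine ⟨16, ?_⟩
  intro n hn A hA
  have hn4 : 4 ≤ n := by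
    by_contra h
    push_neg at h
    have : n ^ 2 ≤ 3 ^ 2 := Nat.pow_le_pow_left (by omega) 2
    omega
  have hp12 : p ≤ 1/2 := by linarith [hp1]; 
  have hq1' : q ≤ 1 := by linarith
  have hp1' : p ≤ 1 := by linarith
  set B : ℝ := q * (p^2 * (1-p)^2) with hB
  -- pairing bound for interior vertices
  have hpair : ∀ u ∈ interiorSet n, ∀ s : (Fin n × Fin n) → Bool,
      B ≤ expVal (gridGraph n) p q (ySof s) (fun X => if A X u = ySof s u then 0 else 1)
        + expVal (gridGraph n) p q (flipAt u (ySof s))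
            (fun X => if A X u = flipAt u (ySof s) u then 0 else 1) := by
    intro u hu s
    simp only [interiorSet, Finset.mem_filter, Finset.mem_univ, true_and] at hu
    obtain ⟨e1, e2, e3, e4, h12, h13, h14, h23, h24, h34, hinc⟩ :=
      grid_edges n u hu.1 hu.2.1 hu.2.2.1 hu.2.2.2
    exact core_pair_bound (gridGraph n) p q hp0 hp12 hq0 hq1 u e1 e2 e3 e4
      h12 h13 h14 h23 h24 h34 hinc (ySof s)
      (by by_cases h : s u = true <;> simp [ySof, h, IsSign]) A (fun X => hA X u)
  -- summed over all sign patterns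
  have hsumu : ∀ u ∈ interiorSet n,
      (Fintype.card ((Fin n × Fin n) → Bool) : ℝ) * (B/2)
        ≤ ∑ s : (Fin n × Fin n) → Bool,
            expVal (gridGraph n) p q (ySof s) (fun X => if A X u = ySof s u then 0 else 1) := by
    intro u hu
    have h1 : ∑ _s : (Fin n × Fin n) → Bool, B
        ≤ ∑ s : (Fin n × Fin n) → Bool,
            (expVal (gridGraph n) p q (ySof s) (fun X => if A X u = ySof s u then 0 else 1)
            + expVal (gridGraph n) p q (flipAt u (ySof s))
                (fun X => if A X u = flipAt u (ySof s) u then 0 else 1)) :=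
      Finset.sum_le_sum fun s _ => hpair u hu s
    have h2 : ∑ s : (Fin n × Fin n) → Bool,
          expVal (gridGraph n) p q (flipAt u (ySof s))
            (fun X => if A X u = flipAt u (ySof s) u then 0 else 1)
        = ∑ s : (Fin n × Fin n) → Bool,
            expVal (gridGraph n) p q (ySof s) (fun X => if A X u = ySof s u then 0 else 1) := by
      refine Fintype.sum_bijective (flipB u) (flipB_bijective u) _ _ fun s => ?_
      rw [flipAt_ySof]
    rw [Finset.sum_add_distrib, h2, Finset.sum_const, Finset.card_univ, nsmul_eq_mul] at h1
    linarith
  -- total sum over sign patterns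
  have h3 : ∑ _s : (Fin n × Fin n) → Bool, (((interiorSet n).card : ℝ) * (B/2))
      ≤ ∑ s : (Fin n × Fin n) → Bool,
          expVal (gridGraph n) p q (ySof s) (fun X => (hamming (A X) (ySof s) : ℝ)) := by
    calc ∑ _s : (Fin n × Fin n) → Bool, (((interiorSet n).card : ℝ) * (B/2))
        = (Fintype.card ((Fin n × Fin n) → Bool) : ℝ) * (((interiorSet n).card : ℝ) * (B/2)) := by
          rw [Finset.sum_const, Finset.card_univ, nsmul_eq_mul]
      _ = ∑ u ∈ interiorSet n, (Fintype.card ((Fin n × Fin n) → Bool) : ℝ) * (B/2) := by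
          rw [Finset.sum_const, nsmul_eq_mul]; ring
      _ ≤ ∑ u ∈ interiorSet n, ∑ s : (Fin n × Fin n) → Bool,
            expVal (gridGraph n) p q (ySof s) (fun X => if A X u = ySof s u then 0 else 1) :=
          Finset.sum_le_sum fun u hu => hsumu u hu
      _ = ∑ s : (Fin n × Fin n) → Bool, ∑ u ∈ interiorSet n,
            expVal (gridGraph n) p q (ySof s) (fun X => if A X u = ySof s u then 0 else 1) :=
          Finset.sum_comm
      _ ≤ ∑ s : (Fin n × Fin n) → Bool,
            expVal (gridGraph n) p q (ySof s) (fun X => (hamming (A X) (ySof s) : ℝ)) :=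
          Finset.sum_le_sum fun s _ => hamming_ge n p q hp0.le hp1' hq0.le hq1' A (ySof s)
  obtain ⟨s, -, hs⟩ := Finset.exists_le_of_sum_le Finset.univ_nonempty h3
  refine ⟨ySof s, fun v => by by_cases h : s v = true <;> simp [ySof, h, IsSign], ?_⟩
  refine le_trans ?_ hs
  -- numeric bound
  have hcard := card_interior n hn4
  have hsq : (1/2 : ℝ) ≤ (1-p)^2 := by nlinarith
  have e1 : q * p^2/4 ≤ B/2 := by
    have key : 0 ≤ q * p^2 * ((1-p)^2 - 1/2) :=
      mul_nonneg (mul_nonneg hq0.le (sq_nonneg p)) (by linarith)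
    rw [hB]; nlinarith
  have hA1 : (n:ℝ)^2/4 * (q * p^2/4) ≤ ((interiorSet n).card : ℝ) * (B/2) := by
    apply mul_le_mul hcard e1 (by positivity) (by positivity)
  nlinarith [hA1]
end
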